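/- For every x ∈ ℂ^{M+1} with |x_{M+1}| = 1, writing u = (x₁,…,x_M) ∈ ℂ^M and w = x_{M+1}, one has x†Cx = ‖P(H·(w̄·u) + c)‖² − ‖Pc‖² (in particular x†Cx is real). Consequently, a vector x ∈ ℂ^{M+1} with |x_m| = 1 for all m = 1,…,M+1 minimizes x ↦ x†Cx over all such unit-modulus vectors if and only if the vector u' ∈ ℂ^M with u'_m = x_m/x_{M+1} minimizes u' ↦ ‖P(Hu' + c)‖² over all u' ∈ ℂ^M with |u'_m| = 1 for all m; i.e., the homogenized QCQP is equivalent to the original azimuth-bias QCQP. -/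

import Mathlib

open Matrix
open scoped ComplexOrder

/-- `P = I_{K−1} − ‖t‖⁻² t tᵀ`, regarded as a complex `(K−1)×(K−1)` matrix; it is the
orthogonal projection onto the orthogonal complement of the time-difference vector `t`. -/
noncomputable def Pmat {K : ℕ} (t : Fin (K - 1) → ℝ) :
    Matrix (Fin (K - 1)) (Fin (K - 1)) ℂ :=
  1 - Matrix.of fun i j => (((∑ k, t k ^ 2)⁻¹ * (t i * t j) : ℝ) : ℂ)

lemma Pmat_herm {K : ℕ} (t : Fin (K - 1) → ℝ) : (Pmat t)ᴴ = Pmat t := by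
  ext i j
  simp [Pmat, conjTranspose_apply, Matrix.one_apply, Matrix.sub_apply]
  by_cases h : i = j <;> simp [h, eq_comm, mul_comm]

lemma Pmat_idem {K : ℕ} (t : Fin (K - 1) → ℝ) (ht : t ≠ 0) :
    Pmat t * Pmat t = Pmat t := by
  have hS : (∑ k, t k ^ 2) ≠ 0 := by
    obtain ⟨k, hk⟩ := Function.ne_iff.mp ht
    have : 0 < ∑ k, t k ^ 2 := by
      apply Finset.sum_pos' (fun i _ => sq_nonneg _)
      refine ⟨k, Finset.mem_univ k, ?_⟩
      have hk' : t k ≠ 0 := by simpa using hk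
      positivity
    exact this.ne'
  set Q : Matrix (Fin (K-1)) (Fin (K-1)) ℂ :=
    Matrix.of fun i j => (((∑ k, t k ^ 2)⁻¹ * (t i * t j) : ℝ) : ℂ) with hQ
  have hQQ : Q * Q = Q := by
    ext i j
    simp only [Matrix.mul_apply, hQ, Matrix.of_apply]
    norm_cast
    have : ∀ k : Fin (K-1), ((∑ k, t k ^ 2)⁻¹ * (t i * t k)) * ((∑ k, t k ^ 2)⁻¹ * (t k * t j))
        = ((∑ k, t k ^ 2)⁻¹ ^ 2 * (t i * t j)) * t k ^ 2 := fun k => by ring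
    rw [Finset.sum_congr rfl (fun k _ => this k), ← Finset.mul_sum]
    field_simp
  have : Pmat t = 1 - Q := rfl
  rw [this, sub_mul, mul_sub, mul_sub, one_mul, mul_one, hQQ, sub_self, sub_zero, one_mul]

lemma sum_abs_sq {ι : Type*} [Fintype ι] (v : ι → ℂ) :
    ((∑ k, norm (v k) ^ 2 : ℝ) : ℂ) = star v ⬝ᵥ v := by
  rw [Complex.ofReal_sum]
  apply Finset.sum_congr rfl
  intro k _
  rw [Complex.sq_norm]
  simp [Complex.normSq_eq_conj_mul_self]

lemma star_mulVec_dot {n m : Type*} [Fintype n] [Fintype m]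
    (A : Matrix n m ℂ) (B : Matrix n n ℂ) (y : m → ℂ) (z : n → ℂ) :
    star (A *ᵥ y) ⬝ᵥ (B *ᵥ z) = star y ⬝ᵥ ((Aᴴ * B) *ᵥ z) := by
  rw [star_mulVec, dotProduct_mulVec, vecMul_vecMul, ← dotProduct_mulVec]

lemma proj_norm {K : ℕ} (t : Fin (K - 1) → ℝ) (ht : t ≠ 0) (v : Fin (K-1) → ℂ) :
    ((∑ k, norm ((Pmat t *ᵥ v) k) ^ 2 : ℝ) : ℂ) = star v ⬝ᵥ (Pmat t *ᵥ v) := by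
  rw [sum_abs_sq, star_mulVec_dot, Pmat_herm, Pmat_idem t ht]

/-- The Hermitian block matrix `C = [[H†PH, H†Pc],[c†PH, 0]] ∈ ℂ^{(M+1)×(M+1)}`, indexed by
`Fin M ⊕ Fin 1` (the last index playing the role of the homogenization coordinate). -/
noncomputable def Cmat {K M : ℕ} (H : Matrix (Fin (K - 1)) (Fin M) ℂ)
    (c : Fin (K - 1) → ℂ) (t : Fin (K - 1) → ℝ) :
    Matrix (Fin M ⊕ Fin 1) (Fin M ⊕ Fin 1) ℂ :=
  Matrix.fromBlocks (Hᴴ * Pmat t * H)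
    (Matrix.of fun i _ => (Hᴴ *ᵥ (Pmat t *ᵥ c)) i)
    (Matrix.of fun _ j => ((star c) ᵥ* (Pmat t * H)) j) 0

lemma part1 {M K : ℕ} (H : Matrix (Fin (K - 1)) (Fin M) ℂ) (c : Fin (K - 1) → ℂ)
    (t : Fin (K - 1) → ℝ) (ht : t ≠ 0) (x : Fin M ⊕ Fin 1 → ℂ)
    (hx : norm (x (Sum.inr 0)) = 1) :
    star x ⬝ᵥ (Cmat H c t *ᵥ x)
      = (((∑ k, norm ((Pmat t *ᵥ
            (H *ᵥ (fun m => (starRingEnd ℂ) (x (Sum.inr 0)) * x (Sum.inl m)) + c)) k) ^ 2)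
          - ∑ k, norm ((Pmat t *ᵥ c) k) ^ 2 : ℝ) : ℂ) := by
  set w := x (Sum.inr 0) with hwdef
  set y : Fin M → ℂ := fun m => (starRingEnd ℂ) w * x (Sum.inl m) with hydef
  set u : Fin M → ℂ := fun m => x (Sum.inl m) with hudef
  set A := Hᴴ * Pmat t * H with hAdef
  set b := Hᴴ *ᵥ (Pmat t *ᵥ c) with hbdef
  set r := (star c) ᵥ* (Pmat t * H) with hrdef
  have hw1 : w * (starRingEnd ℂ) w = 1 := by
    rw [Complex.mul_conj, Complex.normSq_eq_norm_sq, hx]; norm_num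
  have hy : y = (starRingEnd ℂ) w • u := rfl
  have hsy : star y = w • star u := by
    funext m
    show (starRingEnd ℂ) ((starRingEnd ℂ) w * u m) = w * (starRingEnd ℂ) (u m)
    simp
  have hxe : x = Sum.elim u (fun _ => w) := by
    funext i
    rcases i with m | j
    · rfl
    · rw [Sum.elim_inr, Subsingleton.elim j 0, hwdef]
  -- compute LHS
  have hL : star x ⬝ᵥ (Cmat H c t *ᵥ x)
      = star u ⬝ᵥ (A *ᵥ u) + w * (star u ⬝ᵥ b) + (starRingEnd ℂ) w * (r ⬝ᵥ u) := by
    have h1 : (Matrix.of fun i (_ : Fin 1) => b i) *ᵥ (fun _ => w) = w • b := by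
      funext i
      simp [Matrix.mulVec, dotProduct, mul_comm]
    have hstar : star (Sum.elim u fun _ : Fin 1 => w)
        = Sum.elim (star u) (fun _ : Fin 1 => (starRingEnd ℂ) w) := by
      funext i; rcases i with m | j <;> rfl
    have h2 : (Matrix.of fun (_ : Fin 1) j => r j) *ᵥ u = fun _ => r ⬝ᵥ u := rfl
    rw [hxe, Cmat, fromBlocks_mulVec, Sum.elim_comp_inl, Sum.elim_comp_inr, hstar, sumElim_dotProduct_sumElim, h1, h2,
      Matrix.zero_mulVec, add_zero, dotProduct_add, dotProduct_smul]
    simp [dotProduct, smul_eq_mul, hAdef]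
  -- compute RHS
  have hA1 : star (H *ᵥ y) ⬝ᵥ (Pmat t *ᵥ (H *ᵥ y)) = star y ⬝ᵥ (A *ᵥ y) := by
    rw [star_mulVec_dot, mulVec_mulVec, hAdef]
  have hB1 : star (H *ᵥ y) ⬝ᵥ (Pmat t *ᵥ c) = star y ⬝ᵥ b := by
    rw [star_mulVec_dot, hbdef, ← mulVec_mulVec]
  have hC1 : star c ⬝ᵥ (Pmat t *ᵥ (H *ᵥ y)) = r ⬝ᵥ y := by
    rw [mulVec_mulVec, dotProduct_mulVec, hrdef]
  have hT1 : star y ⬝ᵥ (A *ᵥ y) = star u ⬝ᵥ (A *ᵥ u) := by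
    rw [hsy, hy, mulVec_smul, smul_dotProduct, dotProduct_smul, smul_eq_mul, smul_eq_mul,
      ← mul_assoc, hw1, one_mul]
  have hT2 : star y ⬝ᵥ b = w * (star u ⬝ᵥ b) := by
    rw [hsy, smul_dotProduct, smul_eq_mul]
  have hT3 : r ⬝ᵥ y = (starRingEnd ℂ) w * (r ⬝ᵥ u) := by
    rw [hy, dotProduct_smul, smul_eq_mul]
  rw [Complex.ofReal_sub, proj_norm t ht, proj_norm t ht, hL]
  rw [Matrix.mulVec_add, star_add, add_dotProduct, dotProduct_add, dotProduct_add,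
    hA1, hB1, hC1, hT1, hT2, hT3]
  ring

/-- Equivalence of the homogenized QCQP with the original azimuth-bias QCQP: for any `x` with
`|x_{M+1}| = 1`, `x†Cx = ‖P(H(w̄ u) + c)‖² − ‖Pc‖²` where `u = x_{1:M}` and `w = x_{M+1}`;
consequently, `x` (unit-modulus in all coordinates) minimizes `x ↦ x†Cx` over unit-modulus
vectors iff `u' = x_{1:M}/x_{M+1}` minimizes `u' ↦ ‖P(Hu' + c)‖²` over unit-modulus vectors. -/
theorem homogenized_qcqp_equivalence
    (M K : ℕ) (hM : 1 ≤ M) (hK : 2 ≤ K)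
    (H : Matrix (Fin (K - 1)) (Fin M) ℂ) (c : Fin (K - 1) → ℂ)
    (t : Fin (K - 1) → ℝ) (ht : t ≠ 0) :
    (∀ x : Fin M ⊕ Fin 1 → ℂ, norm (x (Sum.inr 0)) = 1 →
      star x ⬝ᵥ (Cmat H c t *ᵥ x)
        = (((∑ k, norm ((Pmat t *ᵥ
              (H *ᵥ (fun m => (starRingEnd ℂ) (x (Sum.inr 0)) * x (Sum.inl m)) + c)) k) ^ 2)
            - ∑ k, norm ((Pmat t *ᵥ c) k) ^ 2 : ℝ) : ℂ)) ∧
    (∀ x : Fin M ⊕ Fin 1 → ℂ, (∀ i, norm (x i) = 1) →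
      ((∀ x' : Fin M ⊕ Fin 1 → ℂ, (∀ i, norm (x' i) = 1) →
          (star x ⬝ᵥ (Cmat H c t *ᵥ x)).re ≤ (star x' ⬝ᵥ (Cmat H c t *ᵥ x')).re) ↔
        (∀ u' : Fin M → ℂ, (∀ m, norm (u' m) = 1) →
          (∑ k, norm ((Pmat t *ᵥ
              (H *ᵥ (fun m => x (Sum.inl m) / x (Sum.inr 0)) + c)) k) ^ 2)
            ≤ ∑ k, norm ((Pmat t *ᵥ (H *ᵥ u' + c)) k) ^ 2))) := by
  have hp1 : ∀ x : Fin M ⊕ Fin 1 → ℂ, norm (x (Sum.inr 0)) = 1 →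
      star x ⬝ᵥ (Cmat H c t *ᵥ x)
        = (((∑ k, norm ((Pmat t *ᵥ
              (H *ᵥ (fun m => (starRingEnd ℂ) (x (Sum.inr 0)) * x (Sum.inl m)) + c)) k) ^ 2)
            - ∑ k, norm ((Pmat t *ᵥ c) k) ^ 2 : ℝ) : ℂ) :=
    fun x hx => part1 H c t ht x hx
  refine ⟨hp1, ?_⟩
  intro x hx
  have hconv : ∀ (z : Fin M ⊕ Fin 1 → ℂ), norm (z (Sum.inr 0)) = 1 →
      (fun m => (starRingEnd ℂ) (z (Sum.inr 0)) * z (Sum.inl m))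
        = (fun m => z (Sum.inl m) / z (Sum.inr 0)) := by
    intro z hz
    funext m
    have h1 : (starRingEnd ℂ) (z (Sum.inr 0)) * z (Sum.inr 0) = 1 := by
      rw [mul_comm, Complex.mul_conj, Complex.normSq_eq_norm_sq, hz]; norm_num
    have hinv : (starRingEnd ℂ) (z (Sum.inr 0)) = (z (Sum.inr 0))⁻¹ :=
      eq_inv_of_mul_eq_one_left h1
    rw [hinv, div_eq_mul_inv, mul_comm]
  have heval : ∀ (z : Fin M ⊕ Fin 1 → ℂ), norm (z (Sum.inr 0)) = 1 →
      (star z ⬝ᵥ (Cmat H c t *ᵥ z)).re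
        = (∑ k, norm ((Pmat t *ᵥ
            (H *ᵥ (fun m => z (Sum.inl m) / z (Sum.inr 0)) + c)) k) ^ 2)
          - ∑ k, norm ((Pmat t *ᵥ c) k) ^ 2 := by
    intro z hz
    rw [hp1 z hz, hconv z hz, Complex.ofReal_re]
  constructor
  · intro hmin u' hu'
    have h1 := heval x (hx _)
    set x' : Fin M ⊕ Fin 1 → ℂ := Sum.elim u' (fun _ => 1) with hx'def
    have hx'unit : ∀ i, norm (x' i) = 1 := by
      intro i; rcases i with m | j <;> simp [hx'def, hu']
    have h2 := heval x' (hx'unit _)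
    have h3 : (fun m => x' (Sum.inl m) / x' (Sum.inr 0)) = u' := by
      funext m; simp [hx'def]
    rw [h3] at h2
    have h4 := hmin x' hx'unit
    rw [h1, h2] at h4
    linarith
  · intro hmin x' hx'
    have h1 := heval x (hx _)
    have h2 := heval x' (hx' _)
    have hu'' : ∀ m, norm (x' (Sum.inl m) / x' (Sum.inr 0)) = 1 := by
      intro m; rw [norm_div, hx' _, hx' _]; norm_num
    have h4 := hmin _ hu''
    rw [h1, h2]
    linarith
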